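/- arXiv:2004.00767 — 3 statements merged into one kernel-verified Lean document; each statement's English description precedes it below -/
import Mathlib

section
/- Let n, k, s be positive integers with k ≤ n, write k = qs + r with 0 ≤ r < s, and let λ(k,s) be the partition consisting of r copies of q+1 followed by s−r copies of q. Then the ideal I_{n,k,s} = ⟨e_n(x_1,...,x_n), e_{n−1}(x_1,...,x_n), ..., e_{n−k+1}(x_1,...,x_n), x_1^s, ..., x_n^s⟩ equals the ideal I_{n,λ(k,s)} generated by x_1^s,...,x_n^s together with all e_d(S) for S ⊆ {1,...,n} and d > |S| − λ'_n − λ'_{n−1} − ⋯ − λ'_{n−|S|+1}, where λ' is the conjugate of λ(k,s) padded with zeros to length n. -/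
open MvPolynomial

/-- The differential operator associated to the monomial with exponent vector `d`. -/
noncomputable def Dexp {n : ℕ} (d : Fin n →₀ ℕ) :
    Module.End ℚ (MvPolynomial (Fin n) ℚ) :=
  ((List.finRange n).map fun i => ((pderiv i).toLinearMap :
      Module.End ℚ (MvPolynomial (Fin n) ℚ)) ^ (d i)).prod

/-- `odotE f` is the differential operator `∂f = f(∂/∂x_1,…,∂/∂x_n)`. -/
noncomputable def odotE {n : ℕ} (f : MvPolynomial (Fin n) ℚ) :
    Module.End ℚ (MvPolynomial (Fin n) ℚ) :=
  (AddMonoidAlgebra.coeff f).sum fun d c => c • Dexp d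

/-- `pairing f g` is the constant term of `(∂f)(g)`. -/
noncomputable def pairing {n : ℕ} (f g : MvPolynomial (Fin n) ℚ) : ℚ :=
  constantCoeff (odotE f g)


/-- The degree-`d` elementary symmetric polynomial in the variables indexed by
the subset `S` (it is `0` when `d > |S|` and `1` when `d = 0`). -/
noncomputable def eS {n : ℕ} (S : Finset (Fin n)) (d : ℕ) :
    MvPolynomial (Fin n) ℚ :=
  ∑ T ∈ S.powersetCard d, ∏ i ∈ T, X i

/-- `eS` extended to integer degrees, vanishing in negative degrees. -/
noncomputable def eZ {n : ℕ} (S : Finset (Fin n)) (m : ℤ) :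
    MvPolynomial (Fin n) ℚ :=
  if 0 ≤ m then eS S m.toNat else 0

/-- `conj lam j` is the `j`-th part `λ'_j` (for `j ≥ 1`) of the conjugate of
the partition `lam`, i.e. the number of parts of `lam` of size at least `j`. -/
def conj (lam : List ℕ) (j : ℕ) : ℕ := (lam.filter fun p => j ≤ p).length

/-- Griffin's ideal `I_{n,λ}`, generated by `x_i^s` for `1 ≤ i ≤ n` (where `s`
is the number of parts of `λ`) together with the partial elementary symmetric
polynomials `e_d(S)` for `S ⊆ [n]` and
`d > |S| - λ'_n - λ'_{n-1} - ⋯ - λ'_{n-|S|+1}`. -/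
noncomputable def griffinIdeal (n : ℕ) (lam : List ℕ) :
    Ideal (MvPolynomial (Fin n) ℚ) :=
  Ideal.span ((Set.range fun i : Fin n => X i ^ lam.length) ∪
    {f | ∃ (S : Finset (Fin n)) (d : ℕ),
      (S.card : ℤ) - ∑ t ∈ Finset.range S.card, (conj lam (n - t) : ℤ) < (d : ℤ) ∧
      f = eS S d})

lemma filter_replicate_length (p : ℕ → Bool) (m a : ℕ) :
    ((List.replicate m a).filter p).length = if p a then m else 0 := by
  induction m with
  | zero => simp
  | succ m ih =>
    rw [List.replicate_succ, List.filter_cons]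
    split <;> simp_all

lemma conj_repl (q r s j : ℕ) :
    conj (List.replicate r (q+1) ++ List.replicate (s-r) q) j =
      (if j ≤ q + 1 then r else 0) + (if j ≤ q then s - r else 0) := by
  unfold conj
  rw [List.filter_append, List.length_append, filter_replicate_length,
    filter_replicate_length]
  simp

lemma sum_range_ite (n a c : ℕ) :
    (∑ j ∈ Finset.range n, if j < a then c else 0) = min a n * c := by
  have h : (Finset.range n).filter (fun j => j < a) = Finset.range (min a n) := by
    ext j; simp; omega
  rw [← Finset.sum_filter, h, Finset.sum_const, Finset.card_range, smul_eq_mul]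

lemma sum_conj_all (n k s : ℕ) (hk : 0 < k) (hs : 0 < s) (hkn : k ≤ n) :
    (∑ t ∈ Finset.range n,
      conj (List.replicate (k % s) (k / s + 1) ++ List.replicate (s - k % s) (k / s)) (n - t)) = k := by
  set q := k / s with hq
  set r := k % s with hr
  set lam := List.replicate r (q+1) ++ List.replicate (s-r) q with hlam
  have hrefl := Finset.sum_range_reflect (fun j => conj lam (j+1)) n
  have h1 : (∑ t ∈ Finset.range n, conj lam (n - t)) = ∑ j ∈ Finset.range n, conj lam (j+1) := by
    rw [← hrefl]
    refine Finset.sum_congr rfl fun t ht => ?_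
    have : t < n := Finset.mem_range.mp ht
    congr 1
    omega
  rw [h1]
  have h2 : (∑ j ∈ Finset.range n, conj lam (j+1)) =
      (∑ j ∈ Finset.range n, if j < q + 1 then r else 0) +
      (∑ j ∈ Finset.range n, if j < q then s - r else 0) := by
    rw [← Finset.sum_add_distrib]
    refine Finset.sum_congr rfl fun j _ => ?_
    rw [hlam, conj_repl]
    rfl
  rw [h2, sum_range_ite, sum_range_ite]
  have hqn : q ≤ n := le_trans (Nat.div_le_self k s) hkn
  have hmod : s * q + r = k := Nat.div_add_mod k s
  rcases Nat.eq_zero_or_pos r with h0 | hpos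
  · rw [h0]
    have hmin : min q n = q := min_eq_left hqn
    rw [hmin]
    have : q * (s - 0) = s * q := by rw [Nat.sub_zero, mul_comm]
    omega
  · have hs1 : 1 < s := by
      rcases Nat.lt_or_ge 1 s with h | h
      · exact h
      · exfalso
        have hseq : s = 1 := by omega
        rw [hseq] at hr
        omega
    have hqk : q < k := Nat.div_lt_self hk hs1
    have hq1n : q + 1 ≤ n := by omega
    rw [min_eq_left hq1n, min_eq_left hqn]
    have hrs : r < s := Nat.mod_lt k hs
    have e1 : q * (s - r) + q * r = q * s := by
      rw [← Nat.mul_add, Nat.sub_add_cancel (le_of_lt hrs)]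
    have e2 : (q+1) * r = q * r + r := by ring
    have e3 : q * s = s * q := mul_comm q s
    omega

lemma eS_zero_of_lt {n : ℕ} {S : Finset (Fin n)} {d : ℕ} (h : S.card < d) : eS S d = 0 := by
  unfold eS
  rw [Finset.powersetCard_eq_empty.mpr h, Finset.sum_empty]

lemma eS_insert {n : ℕ} {S : Finset (Fin n)} {i : Fin n} (hi : i ∉ S) (e : ℕ) :
    eS (insert i S) (e + 1) = eS S (e + 1) + X i * eS S e := by
  classical
  unfold eS
  rw [Finset.powersetCard_succ_insert hi, Finset.sum_union, Finset.sum_image]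
  · rw [Finset.mul_sum]
    congr 1
    refine Finset.sum_congr rfl fun T hT => ?_
    have hiT : i ∉ T := fun h => hi ((Finset.mem_powersetCard.mp hT).1 h)
    rw [Finset.prod_insert hiT]
  · intro a ha b hb hab
    have hia : i ∉ a := fun h => hi ((Finset.mem_powersetCard.mp ha).1 h)
    have hib : i ∉ b := fun h => hi ((Finset.mem_powersetCard.mp hb).1 h)
    rw [← Finset.erase_insert hia, ← Finset.erase_insert hib, hab]
  · rw [Finset.disjoint_left]
    intro T hT hT'
    obtain ⟨a, ha, rfl⟩ := Finset.mem_image.mp hT'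
    exact hi ((Finset.mem_powersetCard.mp hT).1 (Finset.mem_insert_self i a))

lemma telescope {n : ℕ} {I : Ideal (MvPolynomial (Fin n) ℚ)} {S : Finset (Fin n)} {i : Fin n}
    (hi : i ∉ S) {s d : ℕ} (hsd : s ≤ d) (hx : X i ^ s ∈ I)
    (h : ∀ j, j < s → eS (insert i S) (d - j) ∈ I) : eS S d ∈ I := by
  have key : ∀ m, m ≤ s → X (R := ℚ) i ^ (s - m) * eS S (d - (s - m)) ∈ I := by
    intro m
    induction m with
    | zero =>
      intro _
      simpa using Ideal.mul_mem_right _ _ hx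
    | succ m ih =>
      intro hms
      have ihm := ih (by omega)
      set u := s - (m+1) with hu
      have hux : u < s := by omega
      have hud : u < d := by omega
      obtain ⟨e, he⟩ : ∃ e, d - u = e + 1 := ⟨d - u - 1, by omega⟩
      have hins : eS S (d - u) = eS (insert i S) (d - u) - X i * eS S e := by
        rw [he, eS_insert hi e]
        ring
      rw [hins, mul_sub]
      refine Ideal.sub_mem I (Ideal.mul_mem_left _ _ (h u hux)) ?_
      have h2 : e = d - (s - m) := by omega
      have h3 : u + 1 = s - m := by omega
      have h4 : X (R := ℚ) i ^ u * (X i * eS S e) =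
          X i ^ (s - m) * eS S (d - (s - m)) := by
        rw [h2, ← h3, pow_succ]
        ring
      rw [h4]
      exact ihm
  have := key s le_rfl
  simpa using this

lemma main_mem (n k s : ℕ) (hn : 0 < n) (hk : 0 < k) (hs : 0 < s) (hkn : k ≤ n) :
    ∀ m : ℕ, ∀ S : Finset (Fin n), S.card + m = n → ∀ d : ℕ,
      (S.card : ℤ) - (∑ t ∈ Finset.range S.card,
        (conj (List.replicate (k % s) (k / s + 1) ++ List.replicate (s - k % s) (k / s))
          (n - t) : ℤ)) < (d : ℤ) →
      eS S d ∈ Ideal.span ((Set.range fun i : Fin n => X i ^ s) ∪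
        {f | ∃ d : ℕ, n - k + 1 ≤ d ∧ d ≤ n ∧
          f = eS (Finset.univ : Finset (Fin n)) d}) := by
  set q := k / s with hq
  set r := k % s with hr
  set lam := List.replicate r (q+1) ++ List.replicate (s-r) q with hlam
  have hTn : (∑ t ∈ Finset.range n, conj lam (n - t)) = k := sum_conj_all n k s hk hs hkn
  intro m
  induction m with
  | zero =>
    intro S hS d hd
    have hSu : S = Finset.univ := by
      have hcc : S.card = Fintype.card (Fin n) := by
        rw [Fintype.card_fin]
        omega
      exact (Finset.card_eq_iff_eq_univ S).mp hcc
    subst hSu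
    have hc : (Finset.univ : Finset (Fin n)).card = n := by
      rw [Finset.card_univ, Fintype.card_fin]
    rw [hc, ← Nat.cast_sum, hTn] at hd
    by_cases hdn : d ≤ n
    · exact Ideal.subset_span (Or.inr ⟨d, by omega, hdn, rfl⟩)
    · rw [eS_zero_of_lt (by omega)]
      exact zero_mem _
  | succ m ih =>
    intro S hS d hd
    have hc : S.card = n - (m+1) := by omega
    have hclt : S.card < n := by omega
    obtain ⟨i, hi⟩ : ∃ i, i ∉ S := by
      by_contra hcon
      push_neg at hcon
      have hSu : S = Finset.univ := Finset.eq_univ_iff_forall.mpr hcon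
      rw [hSu, Finset.card_univ, Fintype.card_fin] at hclt
      omega
    have hrs : r < s := Nat.mod_lt k hs
    by_cases hcase : m + 1 ≤ q
    · -- all relevant conjugate parts equal s
      have hconj_s : ∀ j, j ≤ q → conj lam j = s := by
        intro j hj
        rw [hlam, conj_repl, if_pos (by omega), if_pos hj]
        omega
      have hIco : (∑ t ∈ Finset.Ico S.card n, conj lam (n - t)) = (n - S.card) * s := by
        rw [Finset.sum_congr rfl (fun t ht => ?_), Finset.sum_const, Nat.card_Ico,
          smul_eq_mul]
        have ht' := Finset.mem_Ico.mp ht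
        exact hconj_s (n - t) (by omega)
      have hsplit : (∑ t ∈ Finset.range S.card, conj lam (n - t)) + (n - S.card) * s = k := by
        rw [← hIco, Finset.sum_range_add_sum_Ico _ (le_of_lt hclt), hTn]
      set Tc := ∑ t ∈ Finset.range S.card, conj lam (n - t) with hTc
      rw [← Nat.cast_sum, ← hTc] at hd
      have hms : n - S.card = m + 1 := by omega
      rw [hms] at hsplit
      have e1 : (m+1) * s = m * s + s := by ring
      have e2 : m ≤ m * s := Nat.le_mul_of_pos_right m hs
      have hsd : s ≤ d := by omega
      refine telescope hi hsd (Ideal.subset_span (Or.inl ⟨i, rfl⟩)) fun j hj => ?_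
      have hci : (insert i S).card = S.card + 1 := Finset.card_insert_of_notMem hi
      refine ih (insert i S) (by omega) (d - j) ?_
      rw [hci, Finset.sum_range_succ, ← Nat.cast_sum]
      have hcs : conj lam (n - S.card) = s := hconj_s _ (by omega)
      rw [hcs, ← hTc]
      push_cast
      omega
    · -- all relevant conjugate parts are zero
      have hzero : ∀ t, t < S.card → conj lam (n - t) = 0 := by
        intro t ht
        rw [hlam, conj_repl, if_neg (by omega), if_neg (by omega)]
      have hTc0 : (∑ t ∈ Finset.range S.card, (conj lam (n - t) : ℤ)) = 0 := by
        refine Finset.sum_eq_zero fun t ht => ?_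
        rw [hzero t (Finset.mem_range.mp ht)]
        rfl
      rw [hTc0] at hd
      rw [eS_zero_of_lt (by omega)]
      exact zero_mem _

/-- Proposition, conjectured by A. Wilson: for positive `n,k,s`
with `k ≤ n`, writing `k = qs + r`, the ideal
`I_{n,k,s} = ⟨e_n, e_{n-1}, …, e_{n-k+1}, x_1^s, …, x_n^s⟩` coincides with
Griffin's ideal `I_{n,λ(k,s)}` where `λ(k,s) = ((q+1)^r, q^{s-r})`. -/
theorem I_nks_eq_griffin (n k s : ℕ) (hn : 0 < n) (hk : 0 < k) (hs : 0 < s)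
    (hkn : k ≤ n) :
    Ideal.span ((Set.range fun i : Fin n => X i ^ s) ∪
        {f | ∃ d : ℕ, n - k + 1 ≤ d ∧ d ≤ n ∧
          f = eS (Finset.univ : Finset (Fin n)) d}) =
      griffinIdeal n
        (List.replicate (k % s) (k / s + 1) ++ List.replicate (s - k % s) (k / s)) := by
  have hrs : k % s < s := Nat.mod_lt k hs
  have hlen : (List.replicate (k % s) (k / s + 1) ++
      List.replicate (s - k % s) (k / s)).length = s := by
    rw [List.length_append, List.length_replicate, List.length_replicate]
    omega
  apply le_antisymm
  · rw [Ideal.span_le]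
    rintro f (⟨i, rfl⟩ | ⟨d, hd1, hd2, rfl⟩)
    · rw [griffinIdeal]
      apply Ideal.subset_span
      left
      exact ⟨i, by rw [hlen]⟩
    · rw [griffinIdeal]
      apply Ideal.subset_span
      right
      refine ⟨Finset.univ, d, ?_, rfl⟩
      have hc : (Finset.univ : Finset (Fin n)).card = n := by
        rw [Finset.card_univ, Fintype.card_fin]
      rw [hc, ← Nat.cast_sum, sum_conj_all n k s hk hs hkn]
      omega
  · rw [griffinIdeal, Ideal.span_le]
    rintro f (⟨i, rfl⟩ | ⟨S, d, hcond, rfl⟩)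
    · rw [hlen]
      exact Ideal.subset_span (Or.inl ⟨i, rfl⟩)
    · have hcard : S.card ≤ n := by
        simpa using Finset.card_le_univ S
      exact main_mem n k s hn hk hs hkn (n - S.card) S (by omega) d hcond
end

section
/- Let T be an injective column-strict tableau of shape λ with entries ≤ n, where λ is a partition of k with s parts. Let C_1,...,C_r be the columns of T and let δ_{C_j} be the Vandermonde determinant in the variables whose indices appear in C_j. Then δ_T := ε_T · x(T) factors as δ_T = δ_{C_1} ⋯ δ_{C_r} · ∏ x_i^{s−1}, the product being over all i ∈ {1,...,n} not appearing in T. -/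
open MvPolynomial

open scoped Classical

/-- `(r, j)` (0-based row `r`, column `j`) is a box of the Young diagram of
`lam`: row `r` has `λ_{r+1}` boxes. -/
def IsBoxOf (lam : List ℕ) (r j : ℕ) : Prop := j < lam.getD r 0

/-- The letter `i` appears in the tableau `T` of shape `lam`. -/
def AppearsIn {n : ℕ} (lam : List ℕ) (T : ℕ → ℕ → Fin n) (i : Fin n) : Prop :=
  ∃ r j, IsBoxOf lam r j ∧ T r j = i

/-- `w` lies in the group `C_T` of permutations stabilizing each column of `T`
and fixing every letter not appearing in `T`. -/
def ColStab {n : ℕ} (lam : List ℕ) (T : ℕ → ℕ → Fin n)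
    (w : Equiv.Perm (Fin n)) : Prop :=
  (∀ i : Fin n, ¬AppearsIn lam T i → w i = i) ∧
  (∀ r j, IsBoxOf lam r j → ∃ r', IsBoxOf lam r' j ∧ w (T r j) = T r' j)

/-- `δ_T = ε_T · x(T)` : the antisymmetrization of the monomial `x(T)`
(whose exponent vector is `a`) over the column-stabilizer of `T`. -/
noncomputable def deltaTsum {n : ℕ} (lam : List ℕ) (T : ℕ → ℕ → Fin n)
    (a : Fin n → ℕ) : MvPolynomial (Fin n) ℚ :=
  ∑ w ∈ Finset.univ.filter (ColStab lam T),
    ((Equiv.Perm.sign w : ℤ) : ℚ) •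
      rename (⇑w) (monomial (Finsupp.equivFunOnFinite.symm a) 1)

/-- The product formula `δ_{C_1} ⋯ δ_{C_r} · ∏_{i ∉ T} x_i^{s-1}`, where
`δ_{C_j}` is the Vandermonde determinant in the variables indexed by the
`j`-th column of `T`. -/
noncomputable def deltaTprod {n : ℕ} (lam : List ℕ) (T : ℕ → ℕ → Fin n) :
    MvPolynomial (Fin n) ℚ :=
  (∏ j ∈ Finset.range (lam.headD 0),
    ∏ p ∈ (Finset.range lam.length ×ˢ Finset.range lam.length).filter
        fun p => p.1 < p.2 ∧ IsBoxOf lam p.1 j ∧ IsBoxOf lam p.2 j,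
      (X (T p.1 j) - X (T p.2 j))) *
  ∏ i ∈ Finset.univ.filter fun i : Fin n => ¬AppearsIn lam T i,
    X i ^ (lam.length - 1)

/-- Strict lexicographic order on exponent vectors, with
`x_1 > x_2 > ⋯ > x_n`. -/
def lexLt {n : ℕ} (u v : Fin n →₀ ℕ) : Prop :=
  ∃ i : Fin n, (∀ j, j < i → u j = v j) ∧ u i < v i

/-- downward closed finsets of naturals are ranges -/
lemma dc_eq_range (S : Finset ℕ) (hdc : ∀ r ∈ S, ∀ r' < r, r' ∈ S) :
    S = Finset.range S.card := by
  ext r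
  simp only [Finset.mem_range]
  constructor
  · intro hr
    have hsub : Finset.range (r + 1) ⊆ S := by
      intro x hx
      simp only [Finset.mem_range, Nat.lt_succ_iff] at hx
      rcases eq_or_lt_of_le hx with rfl | hlt
      · exact hr
      · exact hdc r hr x hlt
    have := Finset.card_le_card hsub
    simpa using this
  · intro hr
    by_contra hns
    have hsub : S ⊆ Finset.range r := by
      intro x hx
      simp only [Finset.mem_range]
      by_contra hge
      push_neg at hge
      rcases eq_or_lt_of_le hge with rfl | hlt
      · exact hns hx
      · exact hns (hdc x hx r hlt)
    have := Finset.card_le_card hsub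
    simp only [Finset.card_range] at this
    omega

/-- a `noncommProd` of permutations fixing a point fixes the point -/
lemma noncommProd_fix {β ι : Type*} (s : Finset ι) (f : ι → Equiv.Perm β) (comm) (x : β)
    (hfix : ∀ i ∈ s, f i x = x) : s.noncommProd f comm x = x := by
  refine Finset.noncommProd_induction s f comm (fun π => π x = x) ?_ rfl hfix
  intro p q hp hq
  show p (q x) = x
  rw [hq, hp]

/-- evaluation of a `noncommProd` of permutations where only one factor moves `x` -/
lemma noncommProd_apply_eq {β ι : Type*} [DecidableEq ι] (s : Finset ι)
    (f : ι → Equiv.Perm β) (comm) (x y : β) (j : ι) (hj : j ∈ s) (hja : f j x = y)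
    (hfix : ∀ i ∈ s, i ≠ j → f i x = x) (hfix' : ∀ i ∈ s, i ≠ j → f i y = y) :
    s.noncommProd f comm x = y := by
  classical
  induction s using Finset.cons_induction with
  | empty => exact absurd hj (Finset.notMem_empty j)
  | cons a t ha ih =>
    rw [Finset.noncommProd_cons, Equiv.Perm.mul_apply]
    rcases eq_or_ne a j with rfl | haj
    · rw [noncommProd_fix t f _ x
        (fun i hi => hfix i (Finset.mem_cons_of_mem hi) (fun hij => ha (hij ▸ hi))), hja]
    · have hjt : j ∈ t := by
        rcases Finset.mem_cons.mp hj with rfl | h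
        · exact absurd rfl haj
        · exact h
      rw [ih _ hjt
        (fun i hi hij => hfix i (Finset.mem_cons_of_mem hi) hij)
        (fun i hi hij => hfix' i (Finset.mem_cons_of_mem hi) hij)]
      exact hfix' a (Finset.mem_cons_self a t) haj

lemma sign_viaEmbedding {α β : Type*} [DecidableEq α] [Fintype α] [DecidableEq β] [Fintype β]
    (e : Equiv.Perm α) (ι : α ↪ β) :
    Equiv.Perm.sign (e.viaEmbedding ι) = Equiv.Perm.sign e := by
  rw [Equiv.Perm.viaEmbedding]
  convert Equiv.Perm.sign_extendDomain e (Equiv.ofInjective ι ι.2) using 3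
  all_goals rfl

theorem vdm_aux {R : Type*} [CommRing R] (m : ℕ) (v : ℕ → R) :
    ∑ σ : Equiv.Perm (Fin m), ((Equiv.Perm.sign σ : ℤ) : R) *
        ∏ r : Fin m, v ↑(σ r) ^ (m - 1 - (r : ℕ))
      = ∏ p ∈ (Finset.range m ×ˢ Finset.range m).filter fun p => p.1 < p.2,
          (v p.1 - v p.2) := by
  have key : (∑ σ : Equiv.Perm (Fin m), ((Equiv.Perm.sign σ : ℤ) : R) *
        ∏ r : Fin m, v ↑(σ r) ^ (m - 1 - (r : ℕ)))
      = ((Matrix.vandermonde (fun i : Fin m => v (m - 1 - (i : ℕ)))).submatrix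
          Fin.revPerm Fin.revPerm).det := by
    rw [Matrix.det_apply']
    apply Finset.sum_congr rfl
    intro σ _
    congr 1
    apply Finset.prod_congr rfl
    intro i _
    simp only [Matrix.submatrix_apply, Matrix.vandermonde_apply, Fin.revPerm_apply]
    congr 1
    · congr 1
      rw [Fin.val_rev]
      omega
    · rw [Fin.val_rev]
      omega
  rw [key, Matrix.det_submatrix_equiv_self, Matrix.det_vandermonde]
  rw [Finset.prod_sigma']
  apply Finset.prod_bij'
    (i := fun (p : Σ _ : Fin m, Fin m) _ => ((m - 1 - (p.2 : ℕ), m - 1 - (p.1 : ℕ)) : ℕ × ℕ))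
    (j := fun (p : ℕ × ℕ) hp =>
      ⟨⟨m - 1 - p.2, by simp only [Finset.mem_filter, Finset.mem_product, Finset.mem_range] at hp; omega⟩,
       ⟨m - 1 - p.1, by simp only [Finset.mem_filter, Finset.mem_product, Finset.mem_range] at hp; omega⟩⟩)
  · -- hj
    intro p hp
    simp only [Finset.mem_filter, Finset.mem_product, Finset.mem_range] at hp
    simp only [Finset.mem_sigma, Finset.mem_univ, Finset.mem_Ioi, true_and, Fin.lt_def]
    omega
  · -- left_inv
    intro p hp
    simp only [Finset.mem_sigma, Finset.mem_univ, Finset.mem_Ioi, Fin.lt_def] at hp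
    obtain ⟨x, y⟩ := p
    have h1 := x.isLt; have h2 := y.isLt
    simp only [Sigma.mk.inj_iff, heq_eq_eq, Fin.ext_iff] at *
    constructor <;> omega
  · -- right_inv
    intro p hp
    simp only [Finset.mem_filter, Finset.mem_product, Finset.mem_range] at hp
    obtain ⟨x, y⟩ := p
    simp only [Prod.mk.injEq]
    constructor <;> omega
  · -- h
    intro p hp
    rfl
  · -- hi
    intro p hp
    simp only [Finset.mem_sigma, Finset.mem_univ, Finset.mem_Ioi, Fin.lt_def] at hp
    have h1 := p.1.isLt; have h2 := p.2.isLt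
    simp only [Finset.mem_filter, Finset.mem_product, Finset.mem_range]
    omega

/-- the factorization `δ_T = δ_{C_1} ⋯ δ_{C_r} · ∏_{i ∉ T} x_i^{s-1}`
of the antisymmetrized monomial `ε_T · x(T)`. -/
theorem deltaT_factorization (n k : ℕ) (lam : List ℕ) (hk : 0 < k) (hkn : k ≤ n)
    (hsort : lam.Pairwise (· ≥ ·)) (hsum : lam.sum = k)
    (T : ℕ → ℕ → Fin n)
    (hcolstrict : ∀ r r' j, IsBoxOf lam r j → IsBoxOf lam r' j → r < r' →
      T r j < T r' j)
    (hinj : ∀ r j r' j', IsBoxOf lam r j → IsBoxOf lam r' j' →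
      T r j = T r' j' → r = r' ∧ j = j')
    (a : Fin n → ℕ)
    (ha1 : ∀ r j, IsBoxOf lam r j →
      a (T r j) = ((Finset.range lam.length).filter
        fun r' => r < r' ∧ IsBoxOf lam r' j).card)
    (ha2 : ∀ i : Fin n, ¬AppearsIn lam T i → a i = lam.length - 1)
    : deltaTsum lam T a = deltaTprod lam T := by
  classical
  set c := lam.headD 0 with hc
  -- basic facts about boxes
  have hbr : ∀ {r j : ℕ}, IsBoxOf lam r j → r < lam.length := by
    intro r j hb
    by_contra hge
    push_neg at hge
    have h0 : lam.getD r 0 = 0 := List.getD_eq_default _ _ hge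
    simp only [IsBoxOf, h0] at hb
    omega
  have hmono : ∀ {r r' j : ℕ}, IsBoxOf lam r j → r' ≤ r → IsBoxOf lam r' j := by
    intro r r' j hb hle
    have hr := hbr hb
    have hr' : r' < lam.length := lt_of_le_of_lt hle hr
    rcases eq_or_lt_of_le hle with rfl | hlt
    · exact hb
    · have hrel := List.pairwise_iff_get.mp hsort ⟨r', hr'⟩ ⟨r, hr⟩ hlt
      simp only [List.get_eq_getElem] at hrel
      unfold IsBoxOf at hb ⊢
      rw [List.getD_eq_getElem lam 0 hr'] 
      rw [List.getD_eq_getElem lam 0 hr] at hb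
      omega
  have hjc : ∀ {r j : ℕ}, IsBoxOf lam r j → j < c := by
    intro r j hb
    have hb0 : IsBoxOf lam 0 j := hmono hb (Nat.zero_le r)
    have h0 : 0 < lam.length := lt_of_le_of_lt (Nat.zero_le r) (hbr hb)
    have hhead : lam.headD 0 = lam.getD 0 0 := by cases lam <;> rfl
    unfold IsBoxOf at hb0
    rw [hc, hhead]
    exact hb0
  set ht : ℕ → ℕ := fun j => ((Finset.range lam.length).filter fun r => IsBoxOf lam r j).card
    with hht
  have hfil : ∀ j, ((Finset.range lam.length).filter fun r => IsBoxOf lam r j)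
      = Finset.range (ht j) := by
    intro j
    apply dc_eq_range
    intro r hr r' hlt
    simp only [Finset.mem_filter, Finset.mem_range] at hr ⊢
    exact ⟨lt_trans hlt hr.1, hmono hr.2 (le_of_lt hlt)⟩
  have hbox : ∀ r j : ℕ, IsBoxOf lam r j ↔ r < ht j := by
    intro r j
    constructor
    · intro hb
      have : r ∈ Finset.range (ht j) := by
        rw [← hfil j]
        exact Finset.mem_filter.mpr ⟨Finset.mem_range.mpr (hbr hb), hb⟩
      simpa using this
    · intro hlt
      have : r ∈ (Finset.range lam.length).filter fun r => IsBoxOf lam r j := by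
        rw [hfil j]
        exact Finset.mem_range.mpr hlt
      exact (Finset.mem_filter.mp this).2
  have hts : ∀ j, ht j ≤ lam.length := by
    intro j
    have := Finset.card_filter_le (Finset.range lam.length) (fun r => IsBoxOf lam r j)
    simpa using this
  have hexp : ∀ r j : ℕ, IsBoxOf lam r j → a (T r j) = ht j - 1 - r := by
    intro r j hb
    rw [ha1 r j hb]
    have hset : ((Finset.range lam.length).filter fun r' => r < r' ∧ IsBoxOf lam r' j)
        = Finset.Ico (r + 1) (ht j) := by
      ext x
      simp only [Finset.mem_filter, Finset.mem_range, Finset.mem_Ico, hbox]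
      have := hts j
      constructor
      · rintro ⟨h1, h2, h3⟩; omega
      · rintro ⟨h1, h2⟩; omega
    rw [hset, Nat.card_Ico]
    have := (hbox r j).mp hb
    omega
  have hTinj : ∀ {r j r' : ℕ}, r < ht j → r' < ht j → T r j = T r' j → r = r' := by
    intro r j r' h1 h2 heq
    exact (hinj r j r' j ((hbox r j).mpr h1) ((hbox r' j).mpr h2) heq).1
  have hTcross : ∀ {r j r' j' : ℕ}, r < ht j → r' < ht j' → T r j = T r' j' → j = j' := by
    intro r j r' j' h1 h2 heq
    exact (hinj r j r' j' ((hbox r j).mpr h1) ((hbox r' j').mpr h2) heq).2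
  have hEinj : ∀ j : Fin c, Function.Injective (fun r : Fin (ht ↑j) => T ↑r ↑j) := by
    intro j r1 r2 heq
    exact Fin.ext (hTinj r1.isLt r2.isLt heq)
  -- the forward map Φ from families of column permutations to permutations of Fin n
  have hcomm : ∀ g : ∀ j : Fin c, Equiv.Perm (Fin (ht ↑j)),
      (↑(Finset.univ : Finset (Fin c)) : Set (Fin c)).Pairwise
        (Function.onFun Commute fun j =>
          (g j).viaEmbedding ⟨fun r : Fin (ht ↑j) => T ↑r ↑j, hEinj j⟩) := by
    intro g j1 _ j2 _ hne
    apply Equiv.Perm.Disjoint.commute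
    intro x
    by_cases hx : ∃ r : Fin (ht ↑j1), T ↑r ↑j1 = x
    · right
      apply Equiv.Perm.viaEmbedding_apply_of_notMem
      rintro ⟨r, hr⟩
      simp only [Function.Embedding.coeFn_mk] at hr
      obtain ⟨r1, hr1⟩ := hx
      apply hne
      apply Fin.ext
      exact (hTcross r1.isLt r.isLt (hr1.trans hr.symm)).symm ▸ rfl
    · left
      apply Equiv.Perm.viaEmbedding_apply_of_notMem
      rintro ⟨r, hr⟩
      exact hx ⟨r, hr⟩
  set Φ : (∀ j : Fin c, Equiv.Perm (Fin (ht ↑j))) → Equiv.Perm (Fin n) :=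
    fun g => Finset.univ.noncommProd
      (fun j => (g j).viaEmbedding ⟨fun r : Fin (ht ↑j) => T ↑r ↑j, hEinj j⟩) (hcomm g)
    with hΦdef
  have hΦbox : ∀ g (j : Fin c) (r : Fin (ht ↑j)), Φ g (T ↑r ↑j) = T ↑(g j r) ↑j := by
    intro g j r
    apply noncommProd_apply_eq _ _ _ _ _ j (Finset.mem_univ j)
    · exact Equiv.Perm.viaEmbedding_apply (g j) ⟨fun r : Fin (ht ↑j) => T ↑r ↑j, hEinj j⟩ r
    · intro i _ hij
      apply Equiv.Perm.viaEmbedding_apply_of_notMem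
      rintro ⟨r', hr'⟩
      simp only [Function.Embedding.coeFn_mk] at hr'
      exact hij (Fin.ext (hTcross r'.isLt r.isLt hr'))
    · intro i _ hij
      apply Equiv.Perm.viaEmbedding_apply_of_notMem
      rintro ⟨r', hr'⟩
      simp only [Function.Embedding.coeFn_mk] at hr'
      exact hij (Fin.ext (hTcross r'.isLt (g j r).isLt hr'))
  have hΦfix : ∀ g (i : Fin n), ¬AppearsIn lam T i → Φ g i = i := by
    intro g i hi
    apply noncommProd_fix
    intro j _
    apply Equiv.Perm.viaEmbedding_apply_of_notMem
    rintro ⟨r, hr⟩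
    simp only [Function.Embedding.coeFn_mk] at hr
    exact hi ⟨↑r, ↑j, (hbox ↑r ↑j).mpr r.isLt, hr⟩
  have hΦsign : ∀ g, Equiv.Perm.sign (Φ g) = ∏ j : Fin c, Equiv.Perm.sign (g j) := by
    intro g
    rw [hΦdef]
    rw [Finset.map_noncommProd _ _ _ Equiv.Perm.sign]
    rw [Finset.noncommProd_eq_prod]
    apply Finset.prod_congr rfl
    intro j _
    exact sign_viaEmbedding _ _
  have hΦcol : ∀ g, ColStab lam T (Φ g) := by
    intro g
    constructor
    · intro i hi
      exact hΦfix g i hi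
    · intro r j hb
      have hjc' : j < c := hjc hb
      have hrh : r < ht j := (hbox r j).mp hb
      refine ⟨↑(g ⟨j, hjc'⟩ ⟨r, hrh⟩), (hbox _ j).mpr (Fin.isLt _), ?_⟩
      exact hΦbox g ⟨j, hjc'⟩ ⟨r, hrh⟩
  -- the backward map Ψ
  have hPsiEx : ∀ w : Equiv.Perm (Fin n), ColStab lam T w →
      ∃ g : ∀ j : Fin c, Equiv.Perm (Fin (ht ↑j)), ∀ (j : Fin c) (r : Fin (ht ↑j)),
        w (T ↑r ↑j) = T ↑(g j r) ↑j := by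
    intro w hw
    have hex : ∀ (j : Fin c) (r : Fin (ht ↑j)), ∃ r' : Fin (ht ↑j),
        w (T ↑r ↑j) = T ↑r' ↑j := by
      intro j r
      obtain ⟨r', hb', heq⟩ := hw.2 ↑r ↑j ((hbox ↑r ↑j).mpr r.isLt)
      exact ⟨⟨r', (hbox r' ↑j).mp hb'⟩, heq⟩
    choose f hf using hex
    have hfinj : ∀ j, Function.Injective (f j) := by
      intro j r1 r2 heq
      have h1 : w (T ↑r1 ↑j) = w (T ↑r2 ↑j) := by
        rw [hf j r1, hf j r2, heq]
      exact hEinj j (w.injective h1)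
    refine ⟨fun j => Equiv.ofBijective (f j) (Finite.injective_iff_bijective.mp (hfinj j)), ?_⟩
    intro j r
    exact hf j r
  choose! Ψ hΨ using hPsiEx
  have hPhiPsi : ∀ w, ColStab lam T w → Φ (Ψ w) = w := by
    intro w hw
    ext i
    by_cases hi : AppearsIn lam T i
    · obtain ⟨r, j, hb, rfl⟩ := hi
      have hjc' : j < c := hjc hb
      have hrh : r < ht j := (hbox r j).mp hb
      have h1 : Φ (Ψ w) (T r j) = T ↑(Ψ w ⟨j, hjc'⟩ ⟨r, hrh⟩) j :=
        hΦbox (Ψ w) ⟨j, hjc'⟩ ⟨r, hrh⟩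
      rw [h1, ← hΨ w hw ⟨j, hjc'⟩ ⟨r, hrh⟩]
    · rw [hΦfix _ i hi, hw.1 i hi]
  have hPsiPhi : ∀ g, Ψ (Φ g) = g := by
    intro g
    funext j
    ext r
    have h1 := hΨ (Φ g) (hΦcol g) j r
    have h2 := hΦbox g j r
    have h3 : T ↑(Ψ (Φ g) j r) ↑j = T ↑(g j r) ↑j := by rw [← h1, h2]
    exact congrArg Fin.val (hEinj j h3)
  -- the monomial computation
  have hrenΦ : ∀ g, rename ⇑(Φ g) ((monomial (Finsupp.equivFunOnFinite.symm a)) (1 : ℚ))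
      = (∏ j : Fin c, ∏ r : Fin (ht ↑j), X (T ↑(g j r) ↑j) ^ (ht ↑j - 1 - (r : ℕ))) *
        ∏ i ∈ Finset.univ.filter fun i : Fin n => ¬AppearsIn lam T i,
          X i ^ (lam.length - 1) := by
    intro g
    have hmon : (monomial (Finsupp.equivFunOnFinite.symm a)) (1 : ℚ)
        = ∏ i : Fin n, (X i ^ a i : MvPolynomial (Fin n) ℚ) := by
      rw [monomial_eq, C_1, one_mul, Finsupp.prod_fintype]
      · apply Finset.prod_congr rfl
        intro i _
        congr 1
      · intro i
        exact pow_zero _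
    rw [hmon, map_prod]
    have hren1 : ∀ i : Fin n, rename ⇑(Φ g) ((X i ^ a i : MvPolynomial (Fin n) ℚ)) = X (Φ g i) ^ a i := by
      intro i
      rw [map_pow, rename_X]
    rw [Finset.prod_congr rfl (fun i _ => hren1 i)]
    rw [← Finset.prod_filter_mul_prod_filter_not Finset.univ (fun i => AppearsIn lam T i)]
    congr 1
    · rw [Finset.prod_sigma']
      refine (Finset.prod_bij
        (fun (p : Σ j : Fin c, Fin (ht ↑j)) (_ : p ∈ (Finset.univ : Finset (Fin c)).sigma
          fun j => (Finset.univ : Finset (Fin (ht ↑j)))) => T ↑p.2 ↑p.1) ?_ ?_ ?_ ?_).symm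
      · intro p _
        simp only [Finset.mem_filter, Finset.mem_univ, true_and]
        exact ⟨↑p.2, ↑p.1, (hbox ↑p.2 ↑p.1).mpr p.2.isLt, rfl⟩
      · rintro ⟨j1, r1⟩ _ ⟨j2, r2⟩ _ heq
        have hj : (j1 : ℕ) = (j2 : ℕ) := hTcross r1.isLt r2.isLt heq
        have hj' : j1 = j2 := Fin.ext hj
        subst hj'
        have hr : r1 = r2 := hEinj j1 heq
        subst hr
        rfl
      · intro i hi
        simp only [Finset.mem_filter, Finset.mem_univ, true_and] at hi
        obtain ⟨r, j, hb, rfl⟩ := hi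
        exact ⟨⟨⟨j, hjc hb⟩, ⟨r, (hbox r j).mp hb⟩⟩, Finset.mem_sigma.mpr
          ⟨Finset.mem_univ _, Finset.mem_univ _⟩, rfl⟩
      · rintro ⟨j, r⟩ _
        rw [hΦbox g j r, hexp ↑r ↑j ((hbox ↑r ↑j).mpr r.isLt)]
    · apply Finset.prod_congr rfl
      intro i hi
      simp only [Finset.mem_filter, Finset.mem_univ, true_and] at hi
      rw [hΦfix g i hi, ha2 i hi]
  have hterm : ∀ g, ((Equiv.Perm.sign (Φ g) : ℤ) : MvPolynomial (Fin n) ℚ) *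
      rename ⇑(Φ g) ((monomial (Finsupp.equivFunOnFinite.symm a)) (1 : ℚ))
      = (∏ j : Fin c, ((Equiv.Perm.sign (g j) : ℤ) : MvPolynomial (Fin n) ℚ) *
          ∏ r : Fin (ht ↑j), X (T ↑(g j r) ↑j) ^ (ht ↑j - 1 - (r : ℕ))) *
        ∏ i ∈ Finset.univ.filter fun i : Fin n => ¬AppearsIn lam T i,
          X i ^ (lam.length - 1) := by
    intro g
    rw [hrenΦ g, Finset.prod_mul_distrib]
    have hsg : ((Equiv.Perm.sign (Φ g) : ℤ) : MvPolynomial (Fin n) ℚ)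
        = ∏ j : Fin c, ((Equiv.Perm.sign (g j) : ℤ) : MvPolynomial (Fin n) ℚ) := by
      rw [hΦsign g]
      push_cast
      rfl
    rw [hsg]
    ring
  have hprodsum : deltaTprod lam T
      = ∑ g ∈ Fintype.piFinset (fun j : Fin c => (Finset.univ : Finset (Equiv.Perm (Fin (ht ↑j))))),
        (∏ j : Fin c, ((Equiv.Perm.sign (g j) : ℤ) : MvPolynomial (Fin n) ℚ) *
            ∏ r : Fin (ht ↑j), X (T ↑(g j r) ↑j) ^ (ht ↑j - 1 - (r : ℕ))) *
          ∏ i ∈ Finset.univ.filter fun i : Fin n => ¬AppearsIn lam T i,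
            X i ^ (lam.length - 1) := by
    rw [deltaTprod]
    rw [← Finset.sum_mul]
    congr 1
    have hps : (∏ j : Fin c, ∑ σ ∈ (Finset.univ : Finset (Equiv.Perm (Fin (ht ↑j)))),
          ((Equiv.Perm.sign σ : ℤ) : MvPolynomial (Fin n) ℚ) *
            ∏ r : Fin (ht ↑j), X (T ↑(σ r) ↑j) ^ (ht ↑j - 1 - (r : ℕ)))
        = ∑ g ∈ Fintype.piFinset (fun j : Fin c =>
            (Finset.univ : Finset (Equiv.Perm (Fin (ht ↑j))))), ∏ j : Fin c,
          ((Equiv.Perm.sign (g j) : ℤ) : MvPolynomial (Fin n) ℚ) *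
            ∏ r : Fin (ht ↑j), X (T ↑((g j) r) ↑j) ^ (ht ↑j - 1 - (r : ℕ)) :=
      Finset.prod_univ_sum _ _
    rw [← hps]
    rw [← hc, ← Fin.prod_univ_eq_prod_range]
    apply Finset.prod_congr rfl
    intro j _
    have hFeq : ((Finset.range lam.length ×ˢ Finset.range lam.length).filter
        fun p => p.1 < p.2 ∧ IsBoxOf lam p.1 ↑j ∧ IsBoxOf lam p.2 ↑j)
        = (Finset.range (ht ↑j) ×ˢ Finset.range (ht ↑j)).filter fun p => p.1 < p.2 := by
      ext p
      simp only [Finset.mem_filter, Finset.mem_product, Finset.mem_range, hbox]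
      have := hts ↑j
      constructor
      · rintro ⟨⟨h1, h2⟩, h3, h4, h5⟩
        exact ⟨⟨h4, h5⟩, h3⟩
      · rintro ⟨⟨h1, h2⟩, h3⟩
        exact ⟨⟨by omega, by omega⟩, h3, h1, h2⟩
    rw [hFeq, ← vdm_aux (ht ↑j) (fun r => X (T r ↑j))]
  rw [hprodsum, deltaTsum]
  have hsmul : ∀ (w : Equiv.Perm (Fin n)),
      ((Equiv.Perm.sign w : ℤ) : ℚ) • rename ⇑w ((monomial (Finsupp.equivFunOnFinite.symm a)) (1 : ℚ))
      = ((Equiv.Perm.sign w : ℤ) : MvPolynomial (Fin n) ℚ) *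
        rename ⇑w ((monomial (Finsupp.equivFunOnFinite.symm a)) (1 : ℚ)) := by
    intro w
    rw [MvPolynomial.smul_eq_C_mul, map_intCast]
  rw [Finset.sum_congr rfl (fun w _ => hsmul w)]
  apply Finset.sum_bij' (i := fun w (_ : w ∈ Finset.univ.filter (ColStab lam T)) => Ψ w)
    (j := fun g _ => Φ g)
  · intro w hw
    simp [Fintype.mem_piFinset]
  · intro g hg
    exact Finset.mem_filter.mpr ⟨Finset.mem_univ _, hΦcol g⟩
  · intro w hw
    exact hPhiPsi w (Finset.mem_filter.mp hw).2
  · intro g hg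
    exact hPsiPhi g
  · intro w hw
    conv_lhs => rw [← hPhiPsi w (Finset.mem_filter.mp hw).2]
    exact hterm (Ψ w)
end

section
/- For any injective column-strict tableau T of shape λ with entries ≤ n, the lexicographically largest monomial appearing in the polynomial δ_T is x(T). -/
open MvPolynomial

open scoped Classical

section Aux

variable {n : ℕ} {lam : List ℕ} {T : ℕ → ℕ → Fin n}

lemma box_lt_length {r j : ℕ} (h : IsBoxOf lam r j) : r < lam.length := by
  by_contra h'
  rw [IsBoxOf, List.getD_eq_default _ _ (le_of_not_gt h')] at h
  exact Nat.not_lt_zero _ h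

/-- the "number of boxes below" count is strictly decreasing down a column -/
lemma count_lt {r r' j : ℕ} (hb : IsBoxOf lam r j) (hb' : IsBoxOf lam r' j)
    (h : r < r') :
    ((Finset.range lam.length).filter fun r'' => r' < r'' ∧ IsBoxOf lam r'' j).card <
    ((Finset.range lam.length).filter fun r'' => r < r'' ∧ IsBoxOf lam r'' j).card := by
  apply Finset.card_lt_card
  constructor
  · intro x hx
    simp only [Finset.mem_filter, Finset.mem_range] at hx ⊢
    exact ⟨hx.1, h.trans hx.2.1, hx.2.2⟩
  · intro hsub
    have hr' : r' ∈ (Finset.range lam.length).filter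
        fun r'' => r < r'' ∧ IsBoxOf lam r'' j := by
      simp only [Finset.mem_filter, Finset.mem_range]
      exact ⟨box_lt_length hb', h, hb'⟩
    have := hsub hr'
    simp only [Finset.mem_filter, Finset.mem_range] at this
    exact absurd this.2.1 (lt_irrefl r')

/-- `w` maps letters appearing in `T` to letters appearing in `T`. -/
lemma colstab_appears {w : Equiv.Perm (Fin n)} (hw : ColStab lam T w)
    {i : Fin n} (hi : AppearsIn lam T i) : AppearsIn lam T (w i) := by
  obtain ⟨r, j, hb, hT⟩ := hi
  obtain ⟨r', hb', hw'⟩ := hw.2 r j hb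
  exact ⟨r', j, hb', by rw [← hT, hw']⟩

lemma colstab_inv {w : Equiv.Perm (Fin n)} (hw : ColStab lam T w) :
    ColStab lam T w⁻¹ := by
  classical
  constructor
  · intro i hi
    by_cases h : AppearsIn lam T (w⁻¹ i)
    · have := colstab_appears hw h
      rw [show w (w⁻¹ i) = i from w.apply_symm_apply i] at this
      exact absurd this hi
    · have := hw.1 _ h
      rw [show w (w⁻¹ i) = i from w.apply_symm_apply i] at this
      exact this.symm
  · intro r j hb
    -- w permutes the set of entries of column j
    set S : Finset (Fin n) := ((Finset.range lam.length).filter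
      fun r => IsBoxOf lam r j).image fun r => T r j with hS
    have hmaps : ∀ x ∈ S, w x ∈ S := by
      intro x hx
      simp only [hS, Finset.mem_image, Finset.mem_filter, Finset.mem_range] at hx ⊢
      obtain ⟨r'', ⟨_, hb''⟩, hx⟩ := hx
      obtain ⟨r', hb', hw'⟩ := hw.2 r'' j hb''
      exact ⟨r', ⟨box_lt_length hb', hb'⟩, by rw [← hx, hw']⟩
    have himg : S.image w = S := by
      apply Finset.eq_of_subset_of_card_le
      · intro x hx
        obtain ⟨y, hy, rfl⟩ := Finset.mem_image.mp hx
        exact hmaps y hy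
      · rw [Finset.card_image_of_injective _ w.injective]
    have hTS : T r j ∈ S := by
      simp only [hS, Finset.mem_image, Finset.mem_filter, Finset.mem_range]
      exact ⟨r, ⟨box_lt_length hb, hb⟩, rfl⟩
    rw [← himg] at hTS
    obtain ⟨y, hy, hwy⟩ := Finset.mem_image.mp hTS
    simp only [hS, Finset.mem_image, Finset.mem_filter, Finset.mem_range] at hy
    obtain ⟨r', ⟨_, hb'⟩, rfl⟩ := hy
    refine ⟨r', hb', ?_⟩
    rw [← hwy]
    exact w.symm_apply_apply _

end Aux

section Key

variable {n : ℕ} {lam : List ℕ} {T : ℕ → ℕ → Fin n} {a : Fin n → ℕ}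

variable (hcolstrict : ∀ r r' j, IsBoxOf lam r j → IsBoxOf lam r' j → r < r' →
      T r j < T r' j)
    (hinj : ∀ r j r' j', IsBoxOf lam r j → IsBoxOf lam r' j' →
      T r j = T r' j' → r = r' ∧ j = j')
    (ha1 : ∀ r j, IsBoxOf lam r j →
      a (T r j) = ((Finset.range lam.length).filter
        fun r' => r < r' ∧ IsBoxOf lam r' j).card)
    (ha2 : ∀ i : Fin n, ¬AppearsIn lam T i → a i = lam.length - 1)

include ha1 in
/-- if `i` appears in `T` and `w⁻¹` preserves the `a`-value of `i`, it fixes `i` -/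
lemma fix_of_a_eq {w : Equiv.Perm (Fin n)} (hw : ColStab lam T w)
    {i : Fin n} (hi : AppearsIn lam T i) (hai : a (w⁻¹ i) = a i) : w⁻¹ i = i := by
  obtain ⟨r, j, hb, rfl⟩ := hi
  obtain ⟨r', hb', hw'⟩ := (colstab_inv hw).2 r j hb
  rw [hw', ha1 r j hb, ha1 r' j hb'] at hai
  have hrr : r' = r := by
    rcases lt_trichotomy r r' with h | h | h
    · exact absurd hai (ne_of_lt (count_lt hb hb' h))
    · exact h.symm
    · exact absurd hai.symm (ne_of_lt (count_lt hb' hb h))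
  rw [hw', hrr]

include ha1 in
lemma eq_one_of_a_invariant {w : Equiv.Perm (Fin n)} (hw : ColStab lam T w)
    (hfix : ∀ i, a (w⁻¹ i) = a i) : w = 1 := by
  have : w⁻¹ = 1 := by
    apply Equiv.ext
    intro i
    rw [Equiv.Perm.one_apply]
    by_cases hi : AppearsIn lam T i
    · exact fix_of_a_eq ha1 hw hi (hfix i)
    · exact (colstab_inv hw).1 i hi
  rw [← inv_inv w, this, inv_one]

include hcolstrict ha1 in
lemma lex_of_a_ne {w : Equiv.Perm (Fin n)} (hw : ColStab lam T w)
    (hne : ∃ i, a (w⁻¹ i) ≠ a i) :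
    ∃ i : Fin n, (∀ j', j' < i → a (w⁻¹ j') = a j') ∧ a (w⁻¹ i) < a i := by
  classical
  set S : Finset (Fin n) := Finset.univ.filter fun i => a (w⁻¹ i) ≠ a i with hSdef
  have hSne : S.Nonempty := by
    obtain ⟨i, hi⟩ := hne
    exact ⟨i, by simpa [hSdef] using hi⟩
  obtain ⟨i, hiS, hmin'⟩ : ∃ i ∈ S, ∀ j' ∈ S, i ≤ j' :=
    ⟨S.min' hSne, S.min'_mem hSne, fun j' hj' => S.min'_le j' hj'⟩
  have hne_i : a (w⁻¹ i) ≠ a i := by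
    simpa [hSdef] using hiS
  have hmin : ∀ j', j' < i → a (w⁻¹ j') = a j' := by
    intro j' hj'
    by_contra h
    exact absurd (hmin' j' (by simpa [hSdef] using h)) (not_le.mpr hj')
  refine ⟨i, hmin, ?_⟩
  -- i must appear in T
  have hi_app : AppearsIn lam T i := by
    by_contra h
    exact hne_i (by rw [(colstab_inv hw).1 i h])
  obtain ⟨r, j, hb, rfl⟩ := hi_app
  obtain ⟨r', hb', hw'⟩ := (colstab_inv hw).2 r j hb
  have hrr' : r ≠ r' := by
    rintro rfl
    exact hne_i (by rw [hw'])
  have hr_lt : r < r' := by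
    rcases lt_or_gt_of_ne hrr' with h | h
    · exact h
    · -- r' < r : then T r' j < T r j, fixed by minimality, contradicting injectivity
      exfalso
      have hlt : T r' j < T r j := hcolstrict r' r j hb' hb h
      have hfix : w⁻¹ (T r' j) = T r' j :=
        fix_of_a_eq ha1 hw ⟨r', j, hb', rfl⟩ (hmin _ hlt)
      have : T r j = T r' j := w⁻¹.injective (by rw [hw', hfix])
      exact absurd this (ne_of_gt hlt)
  rw [hw', ha1 r j hb, ha1 r' j hb']
  exact count_lt hb hb' hr_lt

end Key

/-- the lexicographically largest monomial appearing in `δ_T`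
is `x(T)`. -/
theorem deltaT_leading_monomial (n k : ℕ) (lam : List ℕ) (hk : 0 < k) (hkn : k ≤ n)
    (hsort : lam.Pairwise (· ≥ ·)) (hsum : lam.sum = k)
    (T : ℕ → ℕ → Fin n)
    (hcolstrict : ∀ r r' j, IsBoxOf lam r j → IsBoxOf lam r' j → r < r' →
      T r j < T r' j)
    (hinj : ∀ r j r' j', IsBoxOf lam r j → IsBoxOf lam r' j' →
      T r j = T r' j' → r = r' ∧ j = j')
    (a : Fin n → ℕ)
    (ha1 : ∀ r j, IsBoxOf lam r j →
      a (T r j) = ((Finset.range lam.length).filter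
        fun r' => r < r' ∧ IsBoxOf lam r' j).card)
    (ha2 : ∀ i : Fin n, ¬AppearsIn lam T i → a i = lam.length - 1)
    : coeff (Finsupp.equivFunOnFinite.symm a) (deltaTsum lam T a) ≠ 0 ∧
      ∀ d ∈ (deltaTsum lam T a).support, d ≠ Finsupp.equivFunOnFinite.symm a →
        lexLt d (Finsupp.equivFunOnFinite.symm a) := by
  classical
  set A : Fin n →₀ ℕ := Finsupp.equivFunOnFinite.symm a with hA
  have hAapp : ∀ i, A i = a i := fun i => rfl
  have hterm : ∀ (w : Equiv.Perm (Fin n)) (d : Fin n →₀ ℕ),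
      coeff d (((Equiv.Perm.sign w : ℤ) : ℚ) •
        rename (⇑w) (monomial A 1)) =
      if Finsupp.mapDomain (⇑w) A = d then ((Equiv.Perm.sign w : ℤ) : ℚ) else 0 := by
    intro w d
    rw [rename_monomial, coeff_smul, coeff_monomial, smul_eq_mul]
    split <;> simp
  have hcoeff : ∀ d : Fin n →₀ ℕ, coeff d (deltaTsum lam T a) =
      ∑ w ∈ Finset.univ.filter (ColStab lam T),
        if Finsupp.mapDomain (⇑w) A = d then ((Equiv.Perm.sign w : ℤ) : ℚ) else 0 := by
    intro d
    rw [deltaTsum, coeff_sum]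
    exact Finset.sum_congr rfl fun w _ => hterm w d
  have hmapA : ∀ (w : Equiv.Perm (Fin n)) (i : Fin n),
      Finsupp.mapDomain (⇑w) A i = a (w⁻¹ i) := by
    intro w i
    rw [Finsupp.mapDomain_equiv_apply]
    rfl
  have h1mem : (1 : Equiv.Perm (Fin n)) ∈ Finset.univ.filter (ColStab lam T) := by
    refine Finset.mem_filter.mpr ⟨Finset.mem_univ _, ?_, ?_⟩
    · intro i _; rfl
    · intro r j hb; exact ⟨r, hb, rfl⟩
  constructor
  · rw [hcoeff]
    rw [Finset.sum_eq_single_of_mem 1 h1mem]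
    · have : Finsupp.mapDomain (⇑(1 : Equiv.Perm (Fin n))) A = A := by
        ext i; rw [hmapA]; rfl
      simp [this]
    · intro w hw hwne
      have hwcs : ColStab lam T w := (Finset.mem_filter.mp hw).2
      rw [if_neg]
      intro heq
      apply hwne
      apply eq_one_of_a_invariant ha1 hwcs
      intro i
      rw [← hmapA w i, heq, hAapp]
  · intro d hd hdne
    have hd' : coeff d (deltaTsum lam T a) ≠ 0 := by
      rwa [mem_support_iff] at hd
    rw [hcoeff] at hd'
    obtain ⟨w, hw, hwd⟩ : ∃ w ∈ Finset.univ.filter (ColStab lam T),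
        Finsupp.mapDomain (⇑w) A = d := by
      by_contra h
      push_neg at h
      apply hd'
      apply Finset.sum_eq_zero
      intro w hw
      rw [if_neg (h w hw)]
    have hwcs : ColStab lam T w := (Finset.mem_filter.mp hw).2
    have hne : ∃ i, a (w⁻¹ i) ≠ a i := by
      by_contra h
      push_neg at h
      apply hdne
      rw [← hwd]
      ext i
      rw [hmapA, h, hAapp]
    obtain ⟨i, hmin, hlt⟩ := lex_of_a_ne hcolstrict ha1 hwcs hne
    refine ⟨i, ?_, ?_⟩
    · intro j' hj'
      rw [← hwd, hmapA, hmin j' hj', hAapp]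
    · rw [← hwd, hmapA, hAapp]
      exact hlt
end
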